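/- As α → ∞, the surface-layer atomistic strain u₀ᵃ = φ'(2)/(φ''(1) + φ''(2)(1+λ)) satisfies u₀ᵃ = (e^{-α}/α)(1 - 4e^{-α}) + O(e^{-3α}/α). -/

import Mathlib

noncomputable def morseR0 (α : ℝ) : ℝ :=
  1 + (1 / α) * Real.log ((1 + 2 * Real.exp (-α)) / (1 + 2 * Real.exp (-2 * α)))

noncomputable def morse (α φ₀ : ℝ) (r : ℝ) : ℝ :=
  Real.exp (-2 * α * (r - morseR0 α)) - 2 * Real.exp (-α * (r - morseR0 α)) - φ₀

lemma exp_lin_hasDerivAt (c d r : ℝ) :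
    HasDerivAt (fun x => Real.exp (c * (x - d))) (c * Real.exp (c * (r - d))) r := by
  have h : HasDerivAt (fun x : ℝ => c * (x - d)) c r := by
    simpa using ((hasDerivAt_id r).sub_const d).const_mul c
  simpa [mul_comm, Function.comp_def] using (Real.hasDerivAt_exp (c * (r - d))).comp r h

lemma morse_hasDerivAt (α φ₀ r : ℝ) :
    HasDerivAt (morse α φ₀)
      (-2 * α * Real.exp (-2 * α * (r - morseR0 α)) + 2 * α * Real.exp (-α * (r - morseR0 α))) r := by
  have h1 := exp_lin_hasDerivAt (-2 * α) (morseR0 α) r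
  have h2 := exp_lin_hasDerivAt (-α) (morseR0 α) r
  have H := ((h1.sub (h2.const_mul 2)).sub_const φ₀)
  exact H.congr_deriv (by ring)

lemma deriv_morse_eq (α φ₀ : ℝ) :
    deriv (morse α φ₀) = fun r =>
      -2 * α * Real.exp (-2 * α * (r - morseR0 α)) + 2 * α * Real.exp (-α * (r - morseR0 α)) := by
  funext r
  exact (morse_hasDerivAt α φ₀ r).deriv

lemma deriv2_morse (α φ₀ r : ℝ) :
    deriv (deriv (morse α φ₀)) r =
      4 * α ^ 2 * Real.exp (-2 * α * (r - morseR0 α))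
        - 2 * α ^ 2 * Real.exp (-α * (r - morseR0 α)) := by
  rw [deriv_morse_eq]
  have h1 := (exp_lin_hasDerivAt (-2 * α) (morseR0 α) r).const_mul (-2 * α)
  have h2 := (exp_lin_hasDerivAt (-α) (morseR0 α) r).const_mul (2 * α)
  have H := (h1.add h2).deriv
  simp only [Pi.add_def] at H
  rw [H]
  ring

/-- Bounding x from x * s = P. -/
lemma div_bound {x s P B : ℝ} (h : x * s = P) (hs : 1 ≤ s) (hP0 : 0 ≤ P) (hPB : P ≤ B) :
    0 ≤ x ∧ x ≤ B := by
  have hx0 : 0 ≤ x := by nlinarith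
  refine ⟨hx0, ?_⟩
  nlinarith [mul_nonneg hx0 (by linarith : (0:ℝ) ≤ s - 1)]

set_option maxHeartbeats 1600000 in
/-- The key elementary estimates, isolated in a clean context. -/
lemma key_est (q t lam : ℝ) (hq0 : 0 < q) (hq50 : q ≤ 1/50)
    (hts : t * (1 + 2 * q ^ 2) = 1 + 2 * q) (hl0 : 0 < lam) (hl1 : lam < 1)
    (hroot' : q * (2 * t * q - 1) * lam ^ 2
      + ((2 * t - 1) + 2 * (q * (2 * t * q - 1))) * lam + q * (2 * t * q - 1) = 0) :
    1/2 ≤ (2 * t - 1) + q * (2 * t * q - 1) * (1 + lam) ∧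
    0 ≤ (1 - t * q) - (1 - 4 * q) * ((2 * t - 1) + q * (2 * t * q - 1) * (1 + lam)) ∧
    (1 - t * q) - (1 - 4 * q) * ((2 * t - 1) + q * (2 * t * q - 1) * (1 + lam))
      ≤ 16 * q ^ 2 := by
  have hs0 : (0:ℝ) < 1 + 2 * q ^ 2 := by positivity
  have hq20 : (0:ℝ) ≤ q ^ 2 := sq_nonneg q
  have hq30 : (0:ℝ) ≤ q ^ 3 := by positivity
  have hq40 : (0:ℝ) ≤ q ^ 4 := by positivity
  have hq2q : q ^ 2 ≤ (1/50) * q := by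
    have := mul_le_mul_of_nonneg_right hq50 hq0.le
    calc q ^ 2 = q * q := sq q
    _ ≤ (1/50) * q := this
  have hq3q : q ^ 3 ≤ (1/50) * q ^ 2 := by
    have := mul_le_mul_of_nonneg_right hq50 hq20
    calc q ^ 3 = q * q ^ 2 := by ring
    _ ≤ (1/50) * q ^ 2 := this
  have hq4q : q ^ 4 ≤ (1/50) * q ^ 3 := by
    have := mul_le_mul_of_nonneg_right hq50 hq30
    calc q ^ 4 = q * q ^ 3 := by ring
    _ ≤ (1/50) * q ^ 3 := this
  have ht1 : 1 ≤ t := by nlinarith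
  have ht2 : t ≤ 1 + 2 * q := by nlinarith
  have htq0 : 0 ≤ t * q := mul_nonneg (by linarith) hq0.le
  have htq : t * q ≤ 1/10 := by nlinarith [mul_le_mul_of_nonneg_right ht2 hq0.le]
  -- lam ≤ 3 q
  have hkey : lam * ((2 * t - 1) - 2 * q * (1 - 2 * t * q))
      = q * (1 - 2 * t * q) * (1 + lam ^ 2) := by linear_combination hroot'
  have h2tq : 0 ≤ 1 - 2 * (t * q) := by linarith
  have hA : (9:ℝ)/10 ≤ (2 * t - 1) - 2 * q * (1 - 2 * t * q) := by
    have h1 : q * (1 - 2 * t * q) ≤ q * 1 := by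
      apply mul_le_mul_of_nonneg_left (by linarith) hq0.le
    linarith
  have hlamsq : lam ^ 2 ≤ 1 := by nlinarith
  have hRHS : q * (1 - 2 * t * q) * (1 + lam ^ 2) ≤ 2 * q := by
    have h1 : q * (1 - 2 * t * q) ≤ q := by nlinarith
    have h2 : 0 ≤ q * (1 - 2 * t * q) := mul_nonneg hq0.le (by linarith)
    nlinarith
  have hlam3 : lam ≤ 3 * q := by
    have h1 := mul_le_mul_of_nonneg_left hA hl0.le
    linarith [hkey ▸ h1]
  constructor
  · -- the denominator lower bound
    have h1 : -1 ≤ 2 * t * q - 1 := by linarith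
    have h2 : 2 * t * q - 1 ≤ 0 := by linarith
    have h3 : q * (2 * t * q - 1) * (1 + lam) ≥ -2 * q := by nlinarith
    linarith
  -- the E bounds
  have hEs : ((1 - t * q) - (1 - 4 * q) * ((2 * t - 1) + q * (2 * t * q - 1) * (1 + lam)))
      * (1 + 2 * q ^ 2)
      = 12 * q ^ 2 - 2 * q ^ 3 + 8 * q ^ 4
        + lam * q * (1 - 6 * q + 6 * q ^ 2 + 8 * q ^ 3) := by
    linear_combination (-q - 2 * (1 - 4 * q) - 2 * q ^ 2 * (1 - 4 * q) * (1 + lam)) * hts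
  have hfac0 : (0:ℝ) ≤ 1 - 6 * q + 6 * q ^ 2 + 8 * q ^ 3 := by linarith
  have hfac1 : 1 - 6 * q + 6 * q ^ 2 + 8 * q ^ 3 ≤ 1 := by linarith
  have hlq : lam * q ≤ 3 * q * q := mul_le_mul_of_nonneg_right hlam3 hq0.le
  have hlq0 : 0 ≤ lam * q := mul_nonneg hl0.le hq0.le
  have hP0 : 0 ≤ 12 * q ^ 2 - 2 * q ^ 3 + 8 * q ^ 4
      + lam * q * (1 - 6 * q + 6 * q ^ 2 + 8 * q ^ 3) := by
    have := mul_nonneg hlq0 hfac0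
    linarith
  have hP16 : 12 * q ^ 2 - 2 * q ^ 3 + 8 * q ^ 4
      + lam * q * (1 - 6 * q + 6 * q ^ 2 + 8 * q ^ 3) ≤ 16 * q ^ 2 := by
    have hprod := mul_le_mul hlq hfac1 hfac0 (by positivity : (0:ℝ) ≤ 3 * q * q)
    have hqq : 3 * q * q = 3 * q ^ 2 := by ring
    nlinarith
  exact div_bound hEs (by linarith) hP0 hP16

lemma final_ineq (q E d α : ℝ) (hq0 : 0 < q) (hα : 0 < α) (hd : 1/2 ≤ d)
    (hE0 : 0 ≤ E) (hE16 : E ≤ 16 * q ^ 2) : q * E * α ≤ 100 * q ^ 3 * (α * d) := by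
  nlinarith [mul_le_mul_of_nonneg_left hE16 (mul_pos hq0 hα).le,
    mul_le_mul_of_nonneg_left hd (by positivity : (0:ℝ) ≤ 100 * q ^ 3 * α),
    mul_pos (pow_pos hq0 3) hα]

set_option maxHeartbeats 1600000 in
theorem stmt_9 (φ₀ : ℝ) :
    ∃ C α₀ : ℝ, 0 < C ∧ 0 < α₀ ∧ ∀ α : ℝ, α₀ ≤ α →
      ∀ lam : ℝ, lam ∈ Set.Ioo (0 : ℝ) 1 →
        deriv (deriv (morse α φ₀)) 2 * lam ^ 2
          + (deriv (deriv (morse α φ₀)) 1 + 2 * deriv (deriv (morse α φ₀)) 2) * lam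
          + deriv (deriv (morse α φ₀)) 2 = 0 →
        |deriv (morse α φ₀) 2 /
            (deriv (deriv (morse α φ₀)) 1 + deriv (deriv (morse α φ₀)) 2 * (1 + lam))
          - Real.exp (-α) / α * (1 - 4 * Real.exp (-α))|
          ≤ C * Real.exp (-3 * α) / α := by
  refine ⟨100, 4, by norm_num, by norm_num, ?_⟩
  intro α hα lam hlam hroot
  obtain ⟨hlam0, hlam1⟩ := hlam
  have hαpos : (0:ℝ) < α := by linarith
  have hαne : α ≠ 0 := ne_of_gt hαpos
  set q : ℝ := Real.exp (-α) with hq_def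
  clear_value q
  have hq0 : 0 < q := hq_def ▸ Real.exp_pos _
  have hq50 : q ≤ 1/50 := by
    have h1 : q ≤ Real.exp (-4) := hq_def ▸ Real.exp_le_exp.mpr (by linarith)
    have h2 : (2.7182818283 : ℝ) < Real.exp 1 := Real.exp_one_gt_d9
    have h3 : (50:ℝ) < Real.exp 4 := by
      have h : Real.exp 4 = (Real.exp 1)^4 := by rw [← Real.exp_nat_mul]; norm_num
      have h5 : (2.7182818283:ℝ)^4 < (Real.exp 1)^4 :=
        pow_lt_pow_left₀ h2 (by norm_num) (by norm_num)
      rw [h]; nlinarith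
    have h4 : Real.exp (-4) = (Real.exp 4)⁻¹ := by rw [Real.exp_neg]
    rw [h4] at h1
    have h5 : (Real.exp 4)⁻¹ ≤ 1/50 := by
      rw [inv_le_comm₀ (Real.exp_pos 4) (by norm_num)]
      norm_num; linarith
    linarith
  have hq2 : Real.exp (-2 * α) = q ^ 2 := by
    rw [show (-2 : ℝ) * α = -α + -α by ring, Real.exp_add, ← hq_def]; ring
  have hq3 : Real.exp (-3 * α) = q ^ 3 := by
    rw [show (-3 : ℝ) * α = -α + (-α + -α) by ring, Real.exp_add, Real.exp_add, ← hq_def]; ring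
  obtain ⟨t, ht_def⟩ : ∃ t : ℝ, t = (1 + 2 * q) / (1 + 2 * q ^ 2) := ⟨_, rfl⟩
  have hs0 : (0:ℝ) < 1 + 2 * q ^ 2 := by positivity
  have htpos : 0 < t := by rw [ht_def]; positivity
  have hts : t * (1 + 2 * q ^ 2) = 1 + 2 * q := by rw [ht_def]; field_simp
  -- log and exp identities
  have hlog : α * (morseR0 α - 1) = Real.log ((1 + 2 * q) / (1 + 2 * q ^ 2)) := by
    rw [morseR0, hq2, ← hq_def]; field_simp; ring
  have hexplog : Real.exp (α * (morseR0 α - 1)) = t := by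
    rw [hlog, ht_def, Real.exp_log (by positivity)]
  have e11 : Real.exp (-α * ((1:ℝ) - morseR0 α)) = t := by
    rw [show -α * ((1:ℝ) - morseR0 α) = α * (morseR0 α - 1) by ring, hexplog]
  have e21 : Real.exp (-2 * α * ((1:ℝ) - morseR0 α)) = t ^ 2 := by
    rw [show -2 * α * ((1:ℝ) - morseR0 α) = α * (morseR0 α - 1) + α * (morseR0 α - 1) by ring,
      Real.exp_add, hexplog]; ring
  have e12 : Real.exp (-α * ((2:ℝ) - morseR0 α)) = t * q := by
    rw [show -α * ((2:ℝ) - morseR0 α) = α * (morseR0 α - 1) + -α by ring,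
      Real.exp_add, hexplog, ← hq_def]
  have e22 : Real.exp (-2 * α * ((2:ℝ) - morseR0 α)) = t ^ 2 * q ^ 2 := by
    rw [show -2 * α * ((2:ℝ) - morseR0 α) =
      (α * (morseR0 α - 1) + -α) + (α * (morseR0 α - 1) + -α) by ring,
      Real.exp_add, Real.exp_add, hexplog, ← hq_def]; ring
  -- derivative values
  have hd2 : deriv (morse α φ₀) 2 = 2 * α * t * q * (1 - t * q) := by
    rw [deriv_morse_eq]; simp only; rw [e22, e12]; ring
  have hdd1 : deriv (deriv (morse α φ₀)) 1 = 2 * α ^ 2 * t * (2 * t - 1) := by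
    rw [deriv2_morse, e21, e11]; ring
  have hdd2 : deriv (deriv (morse α φ₀)) 2 = 2 * α ^ 2 * t * (q * (2 * t * q - 1)) := by
    rw [deriv2_morse, e22, e12]; ring
  -- simplified root equation
  have hroot2 : 2 * α ^ 2 * t *
      (q * (2 * t * q - 1) * lam ^ 2 + ((2 * t - 1) + 2 * (q * (2 * t * q - 1))) * lam
        + q * (2 * t * q - 1)) = 0 := by
    rw [hdd1, hdd2] at hroot; linear_combination hroot
  have hroot' : q * (2 * t * q - 1) * lam ^ 2 + ((2 * t - 1) + 2 * (q * (2 * t * q - 1))) * lam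
      + q * (2 * t * q - 1) = 0 := by
    rcases mul_eq_zero.mp hroot2 with h | h
    · exfalso; have : (0:ℝ) < 2 * α ^ 2 * t := by positivity
      linarith
    · exact h
  obtain ⟨hdge, hE0, hE16⟩ := key_est q t lam hq0 hq50 hts hlam0 hlam1 hroot'
  obtain ⟨d, hd_def⟩ : ∃ d : ℝ, d = (2 * t - 1) + q * (2 * t * q - 1) * (1 + lam) := ⟨_, rfl⟩
  obtain ⟨E, hE_def⟩ : ∃ E : ℝ, E = (1 - t * q) - (1 - 4 * q) * d := ⟨_, rfl⟩
  rw [← hd_def] at hdge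
  rw [← hd_def, ← hE_def] at hE0 hE16
  have hdpos : 0 < d := by linarith
  have hdne : d ≠ 0 := ne_of_gt hdpos
  -- rewrite the goal
  rw [hd2, hdd1, hdd2, hq3]
  have hDeq : 2 * α ^ 2 * t * (2 * t - 1) + 2 * α ^ 2 * t * (q * (2 * t * q - 1)) * (1 + lam)
      = 2 * α ^ 2 * t * d := by rw [hd_def]; ring
  rw [hDeq]
  have hfrac : 2 * α * t * q * (1 - t * q) / (2 * α ^ 2 * t * d)
      - q / α * (1 - 4 * q) = q * E / (α * d) := by
    rw [hE_def]; field_simp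
  rw [hfrac]
  rw [abs_of_nonneg (div_nonneg (mul_nonneg hq0.le hE0) (by positivity))]
  rw [div_le_div_iff₀ (by positivity) hαpos]
  exact final_ineq q E d α hq0 hαpos hdge hE0 hE16
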